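/- Let a ∈ ℂ, n ∈ ℕ, and z ∈ ℂ with ‖z‖ < 1. Then the n-th Meixner moment satisfies ∑_{x=0}^∞ φ_n(x)·(a)_x·z^x/x! = z^n·(a)_n·(1 − z)^{−a−n}, where (1 − z)^{−a−n} denotes the principal branch of the complex power. -/

import Mathlib

open Finset

open Filter

/-- The Pochhammer symbol `(c)_n = ∏_{j=0}^{n-1} (c + j)`. -/
noncomputable def poch (c : ℂ) (n : ℕ) : ℂ := ∏ j ∈ Finset.range n, (c + (j : ℂ))

/-- The falling factorial `φ_n(x) = ∏_{j=0}^{n-1} (x - j)`. -/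
noncomputable def fallFac (n : ℕ) (x : ℂ) : ℂ := ∏ j ∈ Finset.range n, (x - (j : ℂ))


lemma poch_zero (c : ℂ) : poch c 0 = 1 := by simp [poch]

lemma poch_succ (c : ℂ) (k : ℕ) : poch c (k + 1) = poch c k * (c + k) := by
  simp [poch, Finset.prod_range_succ]

lemma poch_add (c : ℂ) (m k : ℕ) : poch c (m + k) = poch c m * poch (c + m) k := by
  rw [poch, poch, poch, Finset.prod_range_add]
  congr 1
  refine Finset.prod_congr rfl fun j _ => ?_
  push_cast; ring

lemma master (c : ℂ) {r : ℝ} (hr0 : 0 ≤ r) (hr : r < 1) :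
    Summable (fun k : ℕ => ‖poch c k‖ / (k.factorial : ℝ) * ((k : ℝ) + 1 + ‖c‖) * r ^ k) := by
  set f : ℕ → ℝ := fun k => ‖poch c k‖ / (k.factorial : ℝ) * ((k : ℝ) + 1 + ‖c‖) * r ^ k with hf
  have hnn : ∀ k, 0 ≤ f k := fun k => by positivity
  have h1 : Tendsto (fun k : ℕ => 1 / ((k : ℝ) + 1)) atTop (nhds 0) :=
    tendsto_one_div_add_atTop_nhds_zero_nat
  have h2 : Tendsto (fun k : ℕ => 1 / ((k : ℝ) + 1 + ‖c‖)) atTop (nhds 0) := by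
    refine squeeze_zero (fun k => by positivity) (fun k => ?_) h1
    apply one_div_le_one_div_of_le (by positivity)
    have := norm_nonneg c; linarith
  have htend : Tendsto (fun k : ℕ =>
      ((‖c‖ + k) / (k + 1)) * ((k + 2 + ‖c‖) / (k + 1 + ‖c‖)) * r) atTop (nhds r) := by
    have key : ∀ k : ℕ, ((‖c‖ + (k:ℝ)) / (k + 1)) * ((k + 2 + ‖c‖) / (k + 1 + ‖c‖)) * r
        = (1 + (‖c‖ - 1) * (1 / (k + 1))) * (1 + 1 / (k + 1 + ‖c‖)) * r := by
      intro k
      have hk1 : (k : ℝ) + 1 ≠ 0 := by positivity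
      have hk2 : (k : ℝ) + 1 + ‖c‖ ≠ 0 := by positivity
      field_simp
      ring_nf
    simp_rw [key]
    have : Tendsto (fun k : ℕ => (1 + (‖c‖ - 1) * (1 / ((k:ℝ) + 1))) * (1 + 1 / ((k:ℝ) + 1 + ‖c‖)) * r)
        atTop (nhds ((1 + (‖c‖ - 1) * 0) * (1 + 0) * r)) := by
      exact (((tendsto_const_nhds).add ((tendsto_const_nhds).mul h1)).mul
        ((tendsto_const_nhds).add h2)).mul tendsto_const_nhds
    simpa using this
  have hhalf : r < (1 + r) / 2 := by linarith
  have hev : ∀ᶠ k : ℕ in atTop,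
      ((‖c‖ + (k:ℝ)) / (k + 1)) * ((k + 2 + ‖c‖) / (k + 1 + ‖c‖)) * r ≤ (1 + r) / 2 :=
    htend.eventually_le_const hhalf
  refine summable_of_ratio_norm_eventually_le (r := (1 + r) / 2) (by linarith) ?_
  filter_upwards [hev] with k hk
  rw [Real.norm_of_nonneg (hnn _), Real.norm_of_nonneg (hnn _)]
  have step : f (k + 1) ≤ (((‖c‖ + (k:ℝ)) / (k + 1)) * ((k + 2 + ‖c‖) / (k + 1 + ‖c‖)) * r) * f k := by
    have hnorm : ‖poch c (k + 1)‖ ≤ ‖poch c k‖ * (‖c‖ + k) := by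
      rw [poch_succ, norm_mul]
      gcongr
      exact (norm_add_le _ _).trans (by simp)
    calc f (k + 1) = ‖poch c (k+1)‖ / ((k+1).factorial : ℝ) * ((k:ℝ) + 1 + 1 + ‖c‖) * r ^ (k+1) := by
          simp only [hf]; push_cast; ring
      _ ≤ (‖poch c k‖ * (‖c‖ + k)) / ((k+1).factorial : ℝ) * ((k:ℝ) + 1 + 1 + ‖c‖) * r ^ (k+1) := by
          gcongr
      _ = (((‖c‖ + (k:ℝ)) / (k + 1)) * ((k + 2 + ‖c‖) / (k + 1 + ‖c‖)) * r) * f k := by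
          rw [hf]
          have h1 : (k : ℝ) + 1 ≠ 0 := by positivity
          have h2 : (k : ℝ) + 1 + ‖c‖ ≠ 0 := by positivity
          have h3 : ((k.factorial : ℝ)) ≠ 0 := Nat.cast_ne_zero.2 k.factorial_ne_zero
          rw [Nat.factorial_succ]
          push_cast
          field_simp
          ring
  calc f (k + 1) ≤ _ := step
    _ ≤ (1 + r) / 2 * f k := by
        exact mul_le_mul_of_nonneg_right hk (hnn k)

lemma fact_pos' (k : ℕ) : (0:ℝ) < (k.factorial : ℝ) := by positivity

lemma summable1 (c y : ℂ) (hy : ‖y‖ < 1) :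
    Summable (fun k : ℕ => poch c k * y ^ k / (k.factorial : ℂ)) := by
  refine Summable.of_norm_bounded (master c (norm_nonneg y) hy) fun k => ?_
  rw [norm_div, norm_mul, norm_pow, Complex.norm_natCast, div_mul_eq_mul_div,
    div_mul_eq_mul_div]
  have h1 : (1:ℝ) ≤ (k:ℝ) + 1 + ‖c‖ := by
    have := norm_nonneg c; have := Nat.cast_nonneg (α := ℝ) k; linarith
  calc ‖poch c k‖ * ‖y‖ ^ k / (k.factorial:ℝ)
      = ‖poch c k‖ * 1 * ‖y‖ ^ k / (k.factorial:ℝ) := by ring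
    _ ≤ ‖poch c k‖ * ((k:ℝ) + 1 + ‖c‖) * ‖y‖ ^ k / (k.factorial:ℝ) := by gcongr
    _ = ‖poch c k‖ * ((k:ℝ) + 1 + ‖c‖) * ‖y‖ ^ k / (k.factorial:ℝ) := rfl

lemma summable2 (c y : ℂ) (hy : ‖y‖ < 1) :
    Summable (fun k : ℕ => (k : ℂ) * (poch c k * y ^ k / (k.factorial : ℂ))) := by
  refine Summable.of_norm_bounded (master c (norm_nonneg y) hy) fun k => ?_
  rw [norm_mul, norm_div, norm_mul, norm_pow, Complex.norm_natCast, Complex.norm_natCast,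
    div_mul_eq_mul_div, div_mul_eq_mul_div]
  have h1 : (k:ℝ) ≤ (k:ℝ) + 1 + ‖c‖ := by
    have := norm_nonneg c; linarith
  calc (k:ℝ) * (‖poch c k‖ * ‖y‖ ^ k / (k.factorial:ℝ))
      = ‖poch c k‖ * (k:ℝ) * ‖y‖ ^ k / (k.factorial:ℝ) := by ring
    _ ≤ ‖poch c k‖ * ((k:ℝ) + 1 + ‖c‖) * ‖y‖ ^ k / (k.factorial:ℝ) := by gcongr

lemma deriv_bound (c w : ℂ) {r : ℝ} (hr : 0 < r) (hw : ‖w‖ ≤ r) (k : ℕ) :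
    ‖poch c k * ((k : ℂ) * w ^ (k - 1)) / (k.factorial : ℂ)‖
      ≤ (‖poch c k‖ / (k.factorial : ℝ) * ((k : ℝ) + 1 + ‖c‖) * r ^ k) / r := by
  rw [norm_div, norm_mul, norm_mul, norm_pow, Complex.norm_natCast, Complex.norm_natCast]
  cases k with
  | zero => simp; positivity
  | succ m =>
    have hfac := fact_pos' (m+1)
    have hrhs : ‖poch c (m+1)‖ / (((m+1).factorial:ℝ)) * (((m+1:ℕ):ℝ) + 1 + ‖c‖) * r ^ (m+1) / r
        = ‖poch c (m+1)‖ * ((((m+1:ℕ):ℝ) + 1 + ‖c‖) * r ^ m) / (((m+1).factorial:ℝ)) := by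
      rw [pow_succ]
      field_simp
    push_cast at hrhs ⊢
    rw [hrhs]
    have h1 : ((m:ℝ)+1) ≤ ((m:ℝ)+1) + 1 + ‖c‖ := by
      have := norm_nonneg c; linarith
    have h2 : ‖w‖ ^ (m + 1 - 1) ≤ r ^ m := by
      simpa using pow_le_pow_left₀ (norm_nonneg w) hw m
    calc ‖poch c (m+1)‖ * (((m:ℝ)+1) * ‖w‖ ^ (m + 1 - 1)) / (((m+1).factorial:ℝ))
        ≤ ‖poch c (m+1)‖ * ((((m:ℝ)+1) + 1 + ‖c‖) * r ^ m) / (((m+1).factorial:ℝ)) := by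
          gcongr
      _ = ‖poch c (m+1)‖ * ((((m:ℝ)+1) + 1 + ‖c‖) * r ^ m) / (((m+1).factorial:ℝ)) := rfl

lemma summable_deriv (c y : ℂ) (hy : ‖y‖ < 1) :
    Summable (fun k : ℕ => poch c k * ((k : ℂ) * y ^ (k - 1)) / (k.factorial : ℂ)) := by
  set r : ℝ := (‖y‖ + 1) / 2 with hrdef
  have hr0 : 0 < r := by have := norm_nonneg y; rw [hrdef]; positivity
  have hr1 : r < 1 := by rw [hrdef]; linarith
  have hyr : ‖y‖ ≤ r := by rw [hrdef]; linarith
  exact Summable.of_norm_bounded ((master c hr0.le hr1).div_const r)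
    (fun k => deriv_bound c y hr0 hyr k)

lemma shift_term (c y : ℂ) (k : ℕ) :
    poch c (k+1) * (((k+1 : ℕ) : ℂ) * y ^ k) / ((k+1).factorial : ℂ)
      = poch c (k+1) * y ^ k / (k.factorial : ℂ) := by
  have hk1 : ((k+1 : ℕ) : ℂ) ≠ 0 := Nat.cast_ne_zero.2 (Nat.succ_ne_zero k)
  have hkf : ((k.factorial : ℂ)) ≠ 0 := Nat.cast_ne_zero.2 k.factorial_ne_zero
  rw [Nat.factorial_succ]
  push_cast
  push_cast at hk1
  field_simp

lemma Dalt (c y : ℂ) (hy : ‖y‖ < 1) :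
    (∑' k : ℕ, poch c k * ((k : ℂ) * y ^ (k - 1)) / (k.factorial : ℂ))
      = ∑' k : ℕ, poch c (k+1) * y ^ k / (k.factorial : ℂ) := by
  rw [Summable.tsum_eq_zero_add (summable_deriv c y hy)]
  simp only [Nat.cast_zero, zero_mul, mul_zero, zero_div, zero_add]
  refine tsum_congr fun k => ?_
  have := shift_term c y k
  simpa using this

lemma key_identity (c y : ℂ) (hy : ‖y‖ < 1) :
    (1 - y) * (∑' k : ℕ, poch c k * ((k : ℂ) * y ^ (k - 1)) / (k.factorial : ℂ))
      = c * (∑' k : ℕ, poch c k * y ^ k / (k.factorial : ℂ)) := by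
  have hS1 := summable1 c y hy
  have hS2 := summable2 c y hy
  have hDalt := Dalt c y hy
  have hyD : y * (∑' k : ℕ, poch c (k+1) * y ^ k / (k.factorial : ℂ))
      = ∑' k : ℕ, (k : ℂ) * (poch c k * y ^ k / (k.factorial : ℂ)) := by
    rw [← tsum_mul_left, Summable.tsum_eq_zero_add hS2]
    simp only [Nat.cast_zero, zero_mul, zero_add]
    refine tsum_congr fun k => ?_
    have h := shift_term c y k
    push_cast at h ⊢
    rw [← h]
    ring
  have hsum : c * (∑' k : ℕ, poch c k * y ^ k / (k.factorial : ℂ))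
      + y * (∑' k : ℕ, poch c (k+1) * y ^ k / (k.factorial : ℂ))
      = ∑' k : ℕ, poch c (k+1) * y ^ k / (k.factorial : ℂ) := by
    rw [hyD, ← tsum_mul_left, ← Summable.tsum_add (hS1.mul_left c) hS2]
    refine tsum_congr fun k => ?_
    rw [poch_succ]
    ring
  rw [hDalt]
  linear_combination (-1 : ℂ) * hsum

lemma stepA (c : ℂ) (y : ℂ) (hy : ‖y‖ < 1) :
    HasDerivAt (fun w : ℂ => ∑' k : ℕ, poch c k * w ^ k / (k.factorial : ℂ))
      (∑' k : ℕ, poch c k * ((k : ℂ) * y ^ (k - 1)) / (k.factorial : ℂ)) y := by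
  set r : ℝ := (‖y‖ + 1) / 2 with hrdef
  have hr0 : 0 < r := by have := norm_nonneg y; rw [hrdef]; positivity
  have hr1 : r < 1 := by rw [hrdef]; linarith
  have hyr : ‖y‖ < r := by rw [hrdef]; linarith
  have hmem : y ∈ Metric.ball (0:ℂ) r := by
    simpa [Metric.mem_ball, dist_eq_norm] using hyr
  have h0mem : (0:ℂ) ∈ Metric.ball (0:ℂ) r := by simpa [Metric.mem_ball] using hr0
  refine hasDerivAt_tsum_of_isPreconnected
    (g := fun (k : ℕ) (w : ℂ) => poch c k * w ^ k / (k.factorial : ℂ))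
    (g' := fun (k : ℕ) (w : ℂ) => poch c k * ((k : ℂ) * w ^ (k - 1)) / (k.factorial : ℂ))
    (y₀ := (0:ℂ))
    ((master c hr0.le hr1).div_const r) Metric.isOpen_ball
    (convex_ball _ _).isPreconnected
    (fun k w _ => ?_) (fun k w hw => ?_) h0mem ?_ hmem
  · exact (HasDerivAt.const_mul (poch c k) (hasDerivAt_pow k w)).div_const ((k.factorial : ℂ))
  · have hw' : ‖w‖ ≤ r := by
      rw [Metric.mem_ball, dist_eq_norm, sub_zero] at hw
      exact hw.le
    exact deriv_bound c w hr0 hw' k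
  · apply summable_of_ne_finset_zero (s := ({0} : Finset ℕ))
    intro k hk
    have hk0 : k ≠ 0 := by simpa using hk
    simp [zero_pow hk0]

lemma binomial_cpow (c z : ℂ) (hz : ‖z‖ < 1) :
    (∑' k : ℕ, poch c k * z ^ k / (k.factorial : ℂ)) = (1 - z) ^ (-c) := by
  have hslit : ∀ y : ℂ, ‖y‖ < 1 → (1 : ℂ) - y ∈ Complex.slitPlane := by
    intro y hy
    rw [Complex.mem_slitPlane_iff]
    left
    have h1 : y.re ≤ ‖y‖ := by
      calc y.re ≤ |y.re| := le_abs_self _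
        _ ≤ ‖y‖ := Complex.abs_re_le_norm y
    simp only [Complex.sub_re, Complex.one_re]
    linarith
  have hne : ∀ y : ℂ, ‖y‖ < 1 → (1 : ℂ) - y ≠ 0 := fun y hy =>
    Complex.slitPlane_ne_zero (hslit y hy)
  have stepD : ∀ y ∈ Metric.ball (0:ℂ) 1,
      HasDerivAt (fun w : ℂ =>
        (∑' k : ℕ, poch c k * w ^ k / (k.factorial : ℂ)) * (1 - w) ^ c) 0 y := by
    intro y hy
    rw [Metric.mem_ball, dist_eq_norm, sub_zero] at hy
    have h1 := stepA c y hy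
    have hsub : HasDerivAt (fun w : ℂ => 1 - w) (-1 : ℂ) y := by
      simpa using (hasDerivAt_id y).const_sub (1 : ℂ)
    have h2 : HasDerivAt (fun w : ℂ => (1 - w) ^ c)
        (c * (1 - y) ^ (c - 1) * (-1)) y :=
      HasDerivAt.cpow_const hsub (hslit y hy)
    have h3 := h1.mul h2
    have hpow : (1 - y) ^ c = (1 - y) ^ (c - 1) * (1 - y) := by
      have h := Complex.cpow_add (x := 1 - y) (c - 1) 1 (hne y hy)
      rw [Complex.cpow_one, sub_add_cancel] at h
      exact h
    have hkey := key_identity c y hy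
    have hzero : (∑' k : ℕ, poch c k * ((k : ℂ) * y ^ (k - 1)) / (k.factorial : ℂ)) * (1 - y) ^ c
        + (∑' k : ℕ, poch c k * y ^ k / (k.factorial : ℂ)) * (c * (1 - y) ^ (c - 1) * (-1))
          = 0 := by
      rw [hpow]
      linear_combination (1 - y) ^ (c - 1) * hkey
    rw [hzero] at h3
    exact h3
  have hconst : (∑' k : ℕ, poch c k * z ^ k / (k.factorial : ℂ)) * (1 - z) ^ c
      = (∑' k : ℕ, poch c k * (0:ℂ) ^ k / (k.factorial : ℂ)) * (1 - 0) ^ c := by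
    refine Convex.is_const_of_fderivWithin_eq_zero (convex_ball (0:ℂ) 1)
      (fun y hy => ((stepD y hy).differentiableAt.differentiableWithinAt)) (fun y hy => ?_) ?_ ?_
    · rw [fderivWithin_of_isOpen Metric.isOpen_ball hy, (stepD y hy).hasFDerivAt.fderiv]
      ext w
      simp
    · simpa [Metric.mem_ball, dist_eq_norm] using hz
    · simpa [Metric.mem_ball] using one_pos
  have hF0 : (∑' k : ℕ, poch c k * (0:ℂ) ^ k / (k.factorial : ℂ)) = 1 := by
    have hterm : ∀ k : ℕ, k ≠ 0 → poch c k * (0:ℂ) ^ k / (k.factorial : ℂ) = 0 :=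
      fun k hk => by simp [zero_pow hk]
    rw [tsum_eq_single 0 hterm]
    simp [poch_zero]
  have hHz : (∑' k : ℕ, poch c k * z ^ k / (k.factorial : ℂ)) * (1 - z) ^ c = 1 := by
    rw [hconst, hF0]
    simp [Complex.one_cpow]
  rw [Complex.cpow_neg]
  exact eq_inv_of_mul_eq_one_left hHz


lemma fallFac_cast (n : ℕ) : ∀ k : ℕ, fallFac n ((k + n : ℕ) : ℂ)
    = ((k + n).factorial : ℂ) / (k.factorial : ℂ) := by
  induction n with
  | zero =>
    intro k
    simp [fallFac, div_self (Nat.cast_ne_zero.2 k.factorial_ne_zero : (k.factorial : ℂ) ≠ 0)]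
  | succ n ih =>
    intro k
    have hidx : k + (n + 1) = (k + 1) + n := by omega
    rw [hidx]
    rw [fallFac, Finset.prod_range_succ, ← fallFac, ih (k + 1)]
    have h1 : (((k + 1) + n : ℕ) : ℂ) - (n : ℂ) = ((k : ℂ) + 1) := by push_cast; ring
    rw [h1]
    have hk1 : ((k.factorial : ℂ)) ≠ 0 := Nat.cast_ne_zero.2 k.factorial_ne_zero
    have hk2 : (((k+1).factorial : ℂ)) ≠ 0 := Nat.cast_ne_zero.2 (k+1).factorial_ne_zero
    have hfs : (((k+1).factorial : ℂ)) = ((k:ℂ) + 1) * (k.factorial : ℂ) := by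
      rw [Nat.factorial_succ]; push_cast; ring
    have hidx2 : (k + 1) + n = k + (n + 1) := by omega
    have hk3 : ((k : ℂ) + 1) ≠ 0 := Nat.cast_add_one_ne_zero k
    rw [hidx2, hfs]
    field_simp

lemma fallFac_zero_of_lt {n x : ℕ} (h : x < n) : fallFac n (x : ℂ) = 0 := by
  apply Finset.prod_eq_zero (Finset.mem_range.2 h)
  simp

/-- the `n`-th Meixner moment:
`∑_{x≥0} φ_n(x) (a)_x z^x/x! = z^n (a)_n (1-z)^{-a-n}` (principal branch). -/
theorem meixner_moment (a : ℂ) (n : ℕ) (z : ℂ) (hz : ‖z‖ < 1) :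
    (∑' x : ℕ, fallFac n (x : ℂ) * poch a x * z ^ x / (x.factorial : ℂ))
      = z ^ n * poch a n * (1 - z) ^ (-a - (n : ℂ)) := by
  have hinj : Function.Injective (fun k : ℕ => k + n) := add_left_injective n
  have hsupp : Function.support
      (fun x : ℕ => fallFac n (x : ℂ) * poch a x * z ^ x / (x.factorial : ℂ))
      ⊆ Set.range (fun k : ℕ => k + n) := by
    intro x hx
    by_contra hxr
    have hxn : x < n := by
      by_contra h
      exact hxr ⟨x - n, by show x - n + n = x; omega⟩
    apply hx
    simp [fallFac_zero_of_lt hxn]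
  have hshift := Function.Injective.tsum_eq hinj hsupp
  rw [← hshift]
  have hterm : ∀ k : ℕ, fallFac n (((k + n : ℕ) : ℂ)) * poch a (k + n) * z ^ (k + n)
      / ((k + n).factorial : ℂ)
      = (z ^ n * poch a n) * (poch (a + n) k * z ^ k / (k.factorial : ℂ)) := by
    intro k
    rw [fallFac_cast n k, add_comm k n, poch_add a n k]
    have h1 : ((k.factorial : ℂ)) ≠ 0 := Nat.cast_ne_zero.2 k.factorial_ne_zero
    have h2 : (((n + k).factorial : ℂ)) ≠ 0 := Nat.cast_ne_zero.2 (n+k).factorial_ne_zero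
    rw [pow_add]
    field_simp
  calc (∑' k : ℕ, fallFac n (((k + n : ℕ) : ℂ)) * poch a (k + n) * z ^ (k + n)
      / ((k + n).factorial : ℂ))
      = ∑' k : ℕ, (z ^ n * poch a n) * (poch (a + n) k * z ^ k / (k.factorial : ℂ)) :=
        tsum_congr hterm
    _ = (z ^ n * poch a n) * ∑' k : ℕ, poch (a + n) k * z ^ k / (k.factorial : ℂ) :=
        tsum_mul_left
    _ = z ^ n * poch a n * (1 - z) ^ (-a - (n : ℂ)) := by
        rw [binomial_cpow (a + n) z hz]
        congr 1
        ring_nf
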